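/- Let H and G be groups with trivial centers, and let i : H ↪ G be an injective localization. Then there is a unique homomorphism j : Aut(H) → Aut(G) such that for every α ∈ Aut(H), j(α) ∘ i = i ∘ α (identifying H with its image); moreover j is injective and extends the map sending inner automorphisms c_h to c_{i(h)}. -/

import Mathlib

/-- A homomorphism `i : H →* G` is a localization if precomposition with `i`
gives a bijection `Hom(G,G) → Hom(H,G)`. -/
def MonoidHom.IsLocalization {H G : Type*} [Group H] [Group G] (i : H →* G) : Prop :=
  Function.Bijective (fun ψ : G →* G => ψ.comp i)

theorem stmt12 {H G : Type*} [Group H] [Group G]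
    (hZH : Subgroup.center H = ⊥) (hZG : Subgroup.center G = ⊥)
    (i : H →* G) (hinj : Function.Injective i)
    (hloc : i.IsLocalization) :
    ∃ j : MulAut H →* MulAut G,
      (∀ (α : MulAut H) (h : H), j α (i h) = i (α h)) ∧
      Function.Injective j ∧
      (∀ h : H, j (MulAut.conj h) = MulAut.conj (i h)) ∧
      (∀ j' : MulAut H →* MulAut G,
        (∀ (α : MulAut H) (h : H), j' α (i h) = i (α h)) → j' = j) := by
  classical
  let e : (G →* G) ≃ (H →* G) := Equiv.ofBijective _ hloc
  have he : ∀ ψ : G →* G, e ψ = ψ.comp i := fun _ => rfl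
  have hcomp : ∀ f : H →* G, (e.symm f).comp i = f := fun f => e.apply_symm_apply f
  have huniq : ∀ (ψ : G →* G) (f : H →* G), ψ.comp i = f → ψ = e.symm f := by
    intro ψ f h
    apply e.injective
    rw [Equiv.apply_symm_apply, he, h]
  set F : MulAut H → (G →* G) := fun α => e.symm (i.comp α.toMonoidHom) with hFdef
  have hF : ∀ (α : MulAut H) (h : H), F α (i h) = i (α h) := by
    intro α h
    exact DFunLike.congr_fun (hcomp (i.comp α.toMonoidHom)) h
  have hFmul : ∀ α β : MulAut H, F (α * β) = (F α).comp (F β) := by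
    intro α β
    have h1 : ((F α).comp (F β)).comp i = i.comp (α * β).toMonoidHom := by
      ext h
      simp [MonoidHom.comp_apply, hF]
    exact (huniq _ _ h1).symm
  have hFone : F 1 = MonoidHom.id G := by
    have h1 : (MonoidHom.id G).comp i = i.comp (1 : MulAut H).toMonoidHom := by
      ext h; simp
    exact (huniq _ _ h1).symm
  have hFinv : ∀ α : MulAut H, (F α⁻¹).comp (F α) = MonoidHom.id G := by
    intro α
    rw [← hFmul, inv_mul_cancel, hFone]
  have hFinv' : ∀ α : MulAut H, (F α).comp (F α⁻¹) = MonoidHom.id G := by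
    intro α
    rw [← hFmul, mul_inv_cancel, hFone]
  let J : MulAut H → MulAut G := fun α =>
    MonoidHom.toMulEquiv (F α) (F α⁻¹) (hFinv α) (hFinv' α)
  have hJapp : ∀ (α : MulAut H) (x : G), J α x = F α x := fun _ _ => rfl
  let j : MulAut H →* MulAut G := MonoidHom.mk' J (by
    intro α β
    apply MulEquiv.ext
    intro x
    have := DFunLike.congr_fun (hFmul α β) x
    simpa [hJapp] using this)
  have hj : ∀ (α : MulAut H) (h : H), j α (i h) = i (α h) := by
    intro α h
    exact hF α h
  refine ⟨j, hj, ?_, ?_, ?_⟩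
  · intro α β hab
    apply MulEquiv.ext
    intro h
    apply hinj
    rw [← hj α h, ← hj β h, hab]
  · intro h
    have h1 : ((MulAut.conj (i h)).toMonoidHom).comp i
        = i.comp (MulAut.conj h).toMonoidHom := by
      ext x; simp [MulAut.conj]
    have h2 : (MulAut.conj (i h)).toMonoidHom = F (MulAut.conj h) := huniq _ _ h1
    apply MulEquiv.ext
    intro x
    exact (DFunLike.congr_fun h2 x).symm
  · intro j' hj'
    apply MonoidHom.ext
    intro α
    apply MulEquiv.ext
    intro x
    have h1 : ((j' α).toMonoidHom).comp i = i.comp α.toMonoidHom := by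
      ext h; simpa using hj' α h
    have h2 : ((j α).toMonoidHom).comp i = i.comp α.toMonoidHom := by
      ext h; simpa using hj α h
    have := (huniq _ _ h1).trans (huniq _ _ h2).symm
    exact DFunLike.congr_fun this x
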